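/- In ℝ² with coordinates, let D₁ be the closed disk of radius 1 centered at (−√3/2, 0), D₂ the closed disk of radius 1 centered at (√3/2, 0), D₁² the closed disk of radius 2 centered at (−√3/2, 0), D₂² the closed disk of radius 2 centered at (√3/2, 0), D_p the closed disk of radius 1 centered at (0, −1), and D_q the closed disk of radius 1 centered at (0, 1). Then D₁² ∩ D₂² ⊆ D₁ ∪ D₂ ∪ D_p ∪ D_q. -/

import Mathlib

/-- The point of `ℝ²` with the given coordinates. -/
noncomputable def planePt (x y : ℝ) : EuclideanSpace ℝ (Fin 2) :=
  (WithLp.equiv 2 (Fin 2 → ℝ)).symm ![x, y]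

private lemma core_ineq_aux (a v : ℝ) (hv0 : 0 ≤ v)
    (hub : a + v ≤ 13/4) (hlb : v + 1/4 < a)
    (hG : 3*a^2 - 12*a + 4*v^2 > 0) : False := by
  have hv32 : v ≤ 3/2 := by linarith
  have P1 : (a - v - 1/4) * (13/4 - v - a) ≥ 0 :=
    mul_nonneg (by linarith) (by linarith)
  have P2 : v * (3/2 - v) ≥ 0 := mul_nonneg hv0 (by linarith)
  nlinarith [P1, P2]

private lemma core_aux (X Y s : ℝ) (hs2 : s^2 = 3/4) (hs : 0 ≤ s)
    (h1 : (X+s)^2+Y^2 ≤ 4) (h2 : (X-s)^2+Y^2 ≤ 4)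
    (g1 : 1 < (X+s)^2+Y^2) (g2 : 1 < (X-s)^2+Y^2)
    (g3 : 1 < X^2+(Y+1)^2) (g4 : 1 < X^2+(Y-1)^2) : False := by
  have e1 : (X+s)^2 = X^2 + 2*s*X + s^2 := by ring
  have e2 : (X-s)^2 = X^2 - 2*s*X + s^2 := by ring
  have e3 : (Y+1)^2 = Y^2 + 2*Y + 1 := by ring
  have e4 : (Y-1)^2 = Y^2 - 2*Y + 1 := by ring
  set a := X^2 + Y^2 with ha
  have hy1 : 2*Y < a := by linarith
  have hy2 : -(2*Y) < a := by linarith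
  have ha0 : 0 < a := by rcases le_or_gt 0 Y with h | h <;> linarith
  have hY2 : 4*Y^2 < a^2 := by
    have h := mul_pos (by linarith : 0 < a - 2*Y) (by linarith : 0 < a + 2*Y)
    nlinarith [h]
  rcases le_or_gt 0 X with hX | hX
  · refine core_ineq_aux a (2*s*X) (by positivity) (by linarith) (by linarith) ?_
    have hva : (2*s*X)^2 = 3*X^2 := by
      have : (2*s*X)^2 = 4*s^2*X^2 := by ring
      rw [this, hs2]; ring
    nlinarith [hY2, hva]
  · refine core_ineq_aux a (-(2*s*X)) (by nlinarith) (by linarith) (by linarith) ?_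
    have hva : (-(2*s*X))^2 = 3*X^2 := by
      have : (-(2*s*X))^2 = 4*s^2*X^2 := by ring
      rw [this, hs2]; ring
    nlinarith [hY2, hva]

private lemma mem_ball_planePt (p : EuclideanSpace ℝ (Fin 2)) (c d r : ℝ) (hr : 0 ≤ r) :
    p ∈ Metric.closedBall (planePt c d) r ↔ (p 0 - c)^2 + (p 1 - d)^2 ≤ r^2 := by
  rw [Metric.mem_closedBall, EuclideanSpace.dist_eq, Fin.sum_univ_two]
  have h0 : planePt c d 0 = c := rfl
  have h1 : planePt c d 1 = d := rfl
  rw [h0, h1, Real.dist_eq, Real.dist_eq, sq_abs, sq_abs,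
    show r = Real.sqrt (r^2) by rw [Real.sqrt_sq hr],
    Real.sqrt_le_sqrt_iff (by positivity), Real.sq_sqrt (sq_nonneg r)]

/-- **Covering lemma.**  In `ℝ²`, let `D₁`, `D₂` be the closed unit disks centered at
`(−√3/2, 0)` and `(√3/2, 0)`, let `D₁²`, `D₂²` be the closed disks of radius `2` with
the same centers, and let `D_p`, `D_q` be the closed unit disks centered at `(0, −1)`
and `(0, 1)`.  Then `D₁² ∩ D₂² ⊆ D₁ ∪ D₂ ∪ D_p ∪ D_q`. -/
theorem double_disks_inter_subset_union :
    Metric.closedBall (planePt (-(Real.sqrt 3 / 2)) 0) 2 ∩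
      Metric.closedBall (planePt (Real.sqrt 3 / 2) 0) 2 ⊆
    Metric.closedBall (planePt (-(Real.sqrt 3 / 2)) 0) 1 ∪
      Metric.closedBall (planePt (Real.sqrt 3 / 2) 0) 1 ∪
      Metric.closedBall (planePt 0 (-1)) 1 ∪
      Metric.closedBall (planePt 0 1) 1 := by
  intro p hp
  obtain ⟨h1, h2⟩ := hp
  set s : ℝ := Real.sqrt 3 / 2 with hsdef
  have hs : 0 ≤ s := by positivity
  have hs2 : s^2 = 3/4 := by
    rw [hsdef, div_pow, Real.sq_sqrt (by norm_num : (3:ℝ) ≥ 0)]; norm_num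
  set X := p 0 with hX
  set Y := p 1 with hY
  rw [mem_ball_planePt p _ _ _ (by norm_num)] at h1 h2
  by_contra hcon
  simp only [Set.mem_union, not_or] at hcon
  obtain ⟨⟨⟨g1, g2⟩, g3⟩, g4⟩ := hcon
  rw [mem_ball_planePt p _ _ _ (by norm_num)] at g1 g2 g3 g4
  push_neg at g1 g2 g3 g4
  refine core_aux X Y s hs2 hs ?_ ?_ ?_ ?_ ?_ ?_ <;>
    nlinarith [h1, h2, g1, g2, g3, g4]
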